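/- Let m ≥ 3 be odd and suppose the polynomials f(R,X) = Ā + Ā_2 R^{m-3}X² + Ā_4 R^{m-5}X⁴ + ··· + Ā_{m-1}X^{m-1} + Ā_0 R^{m-1} and g(R,X) = B̄X + B̄_1 R^{m-1}X + B̄_3 R^{m-3}X³ + ··· + B̄_m X^m + B̄_0' R^{m} have real coefficients. Then the number of common real zeros (R,X) with R > 0 at which the Jacobian of (f,g) is nonsingular is at most m, i.e., the system has at most m simple solutions in the half-plane R > 0. -/

import Mathlib

/-- `f(R,X) = Ā + Ā₂ R^{m-3}X² + Ā₄ R^{m-5}X⁴ + ⋯ + Ā_{m-1}X^{m-1} + Ā₀ R^{m-1}`,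
with `Ac t` standing for `Ā_{2t}`. -/
noncomputable def fOdd (m : ℕ) (A A0 : ℝ) (Ac : ℕ → ℝ) (R X : ℝ) : ℝ :=
  A + A0 * R ^ (m - 1) +
    ∑ t ∈ Finset.Icc 1 ((m - 1) / 2), Ac t * R ^ (m - 1 - 2 * t) * X ^ (2 * t)

/-- `g(R,X) = B̄X + B̄₁ R^{m-1}X + B̄₃ R^{m-3}X³ + ⋯ + B̄_m X^m + B̄₀' R^m`,
with `Bc t` standing for `B̄_{2t+1}`. -/
noncomputable def gOdd (m : ℕ) (B B0 : ℝ) (Bc : ℕ → ℝ) (R X : ℝ) : ℝ :=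
  B * X + B0 * R ^ m +
    ∑ t ∈ Finset.range ((m - 1) / 2 + 1), Bc t * R ^ (m - 1 - 2 * t) * X ^ (2 * t + 1)

/-- Jacobian determinant of the pair `(f, g)` at `(R, X)`. -/
noncomputable def jacDet (f g : ℝ → ℝ → ℝ) (R X : ℝ) : ℝ :=
  deriv (fun r => f r X) R * deriv (fun x => g R x) X -
    deriv (fun x => f R x) X * deriv (fun r => g r X) R

/-- auxiliary: `P(u)` -/
noncomputable def stmt19Pe (A0 : ℝ) (Ac : ℕ → ℝ) (k : ℕ) (u : ℝ) : ℝ :=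
  A0 + ∑ t ∈ Finset.Icc 1 k, Ac t * u ^ (2 * t)

/-- auxiliary: `Q(u)` -/
noncomputable def stmt19Qe (B0 : ℝ) (Bc : ℕ → ℝ) (k : ℕ) (u : ℝ) : ℝ :=
  B0 + ∑ t ∈ Finset.range (k + 1), Bc t * u ^ (2 * t + 1)

lemma stmt19_aux_pow (x : ℝ) (n : ℕ) : (n : ℝ) * x ^ (n - 1) * x = (n : ℝ) * x ^ n := by
  cases n with
  | zero => simp
  | succ n => rw [Nat.add_sub_cancel, pow_succ]; ring

lemma stmt19_fOdd_eq {m k : ℕ} (hk : m = 2 * k + 1) (A A0 : ℝ) (Ac : ℕ → ℝ)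
    {R : ℝ} (X : ℝ) (hR : R ≠ 0) :
    fOdd m A A0 Ac R X = A + R ^ (m - 1) * stmt19Pe A0 Ac k (X / R) := by
  have hdiv : (m - 1) / 2 = k := by omega
  unfold fOdd stmt19Pe
  rw [hdiv, mul_add, Finset.mul_sum, ← add_assoc]
  congr 1
  · ring
  refine Finset.sum_congr rfl fun t ht => ?_
  have h2t : 2 * t ≤ m - 1 := by
    have := (Finset.mem_Icc.mp ht).2; omega
  rw [div_pow, pow_sub₀ R hR h2t]
  field_simp

lemma stmt19_gOdd_eq {m k : ℕ} (hk : m = 2 * k + 1) (B B0 : ℝ) (Bc : ℕ → ℝ)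
    {R : ℝ} (X : ℝ) (hR : R ≠ 0) :
    gOdd m B B0 Bc R X = B * X + R ^ m * stmt19Qe B0 Bc k (X / R) := by
  have hdiv : (m - 1) / 2 = k := by omega
  unfold gOdd stmt19Qe
  rw [hdiv, mul_add, Finset.mul_sum, ← add_assoc]
  congr 1
  · ring
  refine Finset.sum_congr rfl fun t ht => ?_
  have h2t : 2 * t + 1 ≤ m := by
    have := Finset.mem_range.mp ht; omega
  have : m - 1 - 2 * t = m - (2 * t + 1) := by omega
  rw [this, div_pow, pow_sub₀ R hR h2t]
  field_simp

lemma stmt19_hasDerivAt_f_R (m : ℕ) (A A0 : ℝ) (Ac : ℕ → ℝ) (R X : ℝ) :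
    HasDerivAt (fun r => fOdd m A A0 Ac r X)
      (A0 * (↑(m - 1) * R ^ (m - 1 - 1)) +
        ∑ t ∈ Finset.Icc 1 ((m - 1) / 2),
          Ac t * (↑(m - 1 - 2 * t) * R ^ (m - 1 - 2 * t - 1)) * X ^ (2 * t)) R := by
  unfold fOdd
  exact (((hasDerivAt_pow (m - 1) R).const_mul A0).const_add A).add
    (HasDerivAt.fun_sum fun t _ => ((hasDerivAt_pow (m - 1 - 2 * t) R).const_mul (Ac t)).mul_const _)

lemma stmt19_hasDerivAt_f_X (m : ℕ) (A A0 : ℝ) (Ac : ℕ → ℝ) (R X : ℝ) :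
    HasDerivAt (fun x => fOdd m A A0 Ac R x)
      (∑ t ∈ Finset.Icc 1 ((m - 1) / 2),
          Ac t * R ^ (m - 1 - 2 * t) * (↑(2 * t) * X ^ (2 * t - 1))) X := by
  unfold fOdd
  exact (HasDerivAt.fun_sum fun t _ =>
    (hasDerivAt_pow (2 * t) X).const_mul (Ac t * R ^ (m - 1 - 2 * t))).const_add
    (A + A0 * R ^ (m - 1))

lemma stmt19_hasDerivAt_g_R (m : ℕ) (B B0 : ℝ) (Bc : ℕ → ℝ) (R X : ℝ) :
    HasDerivAt (fun r => gOdd m B B0 Bc r X)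
      (B0 * (↑m * R ^ (m - 1)) +
        ∑ t ∈ Finset.range ((m - 1) / 2 + 1),
          Bc t * (↑(m - 1 - 2 * t) * R ^ (m - 1 - 2 * t - 1)) * X ^ (2 * t + 1)) R := by
  unfold gOdd
  exact (((hasDerivAt_pow m R).const_mul B0).const_add (B * X)).add
    (HasDerivAt.fun_sum fun t _ => ((hasDerivAt_pow (m - 1 - 2 * t) R).const_mul (Bc t)).mul_const _)

lemma stmt19_hasDerivAt_g_X (m : ℕ) (B B0 : ℝ) (Bc : ℕ → ℝ) (R X : ℝ) :
    HasDerivAt (fun x => gOdd m B B0 Bc R x)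
      (B * 1 + 0 +
        ∑ t ∈ Finset.range ((m - 1) / 2 + 1),
          Bc t * R ^ (m - 1 - 2 * t) * (↑(2 * t + 1) * X ^ (2 * t + 1 - 1))) X := by
  unfold gOdd
  exact (((hasDerivAt_id X).const_mul B).add (hasDerivAt_const X (B0 * R ^ m))).add
    (HasDerivAt.fun_sum fun t _ =>
      (hasDerivAt_pow (2 * t + 1) X).const_mul (Bc t * R ^ (m - 1 - 2 * t)))

lemma stmt19_euler_f {m k : ℕ} (hk : m = 2 * k + 1) (A A0 : ℝ) (Ac : ℕ → ℝ) (R X : ℝ) :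
    R * deriv (fun r => fOdd m A A0 Ac r X) R + X * deriv (fun x => fOdd m A A0 Ac R x) X
      = (↑(m - 1) : ℝ) * (fOdd m A A0 Ac R X - A) := by
  rw [(stmt19_hasDerivAt_f_R m A A0 Ac R X).deriv, (stmt19_hasDerivAt_f_X m A A0 Ac R X).deriv]
  unfold fOdd
  have hsub : A + A0 * R ^ (m - 1) +
      (∑ t ∈ Finset.Icc 1 ((m - 1) / 2), Ac t * R ^ (m - 1 - 2 * t) * X ^ (2 * t)) - A
      = A0 * R ^ (m - 1) +
      ∑ t ∈ Finset.Icc 1 ((m - 1) / 2), Ac t * R ^ (m - 1 - 2 * t) * X ^ (2 * t) := by ring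
  rw [hsub]
  simp only [mul_add, Finset.mul_sum]
  rw [add_assoc, ← Finset.sum_add_distrib]
  congr 1
  · linear_combination A0 * stmt19_aux_pow R (m - 1)
  refine Finset.sum_congr rfl fun t ht => ?_
  have h2t : 2 * t ≤ m - 1 := by
    have := (Finset.mem_Icc.mp ht).2; omega
  have e1 := stmt19_aux_pow R (m - 1 - 2 * t)
  have e2 := stmt19_aux_pow X (2 * t)
  have e3 : (↑(m - 1 - 2 * t) : ℝ) + ↑(2 * t) = (↑(m - 1) : ℝ) := by
    rw [Nat.cast_sub h2t]; ring
  linear_combination (Ac t * X ^ (2 * t)) * e1 + (Ac t * R ^ (m - 1 - 2 * t)) * e2 +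
    (Ac t * R ^ (m - 1 - 2 * t) * X ^ (2 * t)) * e3

lemma stmt19_euler_g {m k : ℕ} (hk : m = 2 * k + 1) (B B0 : ℝ) (Bc : ℕ → ℝ) (R X : ℝ) :
    R * deriv (fun r => gOdd m B B0 Bc r X) R + X * deriv (fun x => gOdd m B B0 Bc R x) X
      = (↑m : ℝ) * gOdd m B B0 Bc R X - (↑(m - 1) : ℝ) * (B * X) := by
  rw [(stmt19_hasDerivAt_g_R m B B0 Bc R X).deriv, (stmt19_hasDerivAt_g_X m B B0 Bc R X).deriv]
  unfold gOdd
  simp only [mul_add, Finset.mul_sum]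
  have hcast : (↑(m - 1) : ℝ) = (↑m : ℝ) - 1 := by
    rw [Nat.cast_sub (by omega : 1 ≤ m)]; norm_num
  have e0 := stmt19_aux_pow R m
  have hsum : (∑ t ∈ Finset.range ((m - 1) / 2 + 1),
        R * (Bc t * (↑(m - 1 - 2 * t) * R ^ (m - 1 - 2 * t - 1)) * X ^ (2 * t + 1))) +
      (∑ t ∈ Finset.range ((m - 1) / 2 + 1),
        X * (Bc t * R ^ (m - 1 - 2 * t) * (↑(2 * t + 1) * X ^ (2 * t + 1 - 1))))
      = ∑ t ∈ Finset.range ((m - 1) / 2 + 1),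
        ↑m * (Bc t * R ^ (m - 1 - 2 * t) * X ^ (2 * t + 1)) := by
    rw [← Finset.sum_add_distrib]
    refine Finset.sum_congr rfl fun t ht => ?_
    have h2t : 2 * t + 1 ≤ m := by
      have := Finset.mem_range.mp ht; omega
    have e1 := stmt19_aux_pow R (m - 1 - 2 * t)
    have e2 := stmt19_aux_pow X (2 * t + 1)
    have e3 : (↑(m - 1 - 2 * t) : ℝ) + ↑(2 * t + 1) = (↑m : ℝ) := by
      have h1 : m - 1 - 2 * t = m - (2 * t + 1) := by omega
      rw [h1, Nat.cast_sub h2t]; ring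
    linear_combination (Bc t * X ^ (2 * t + 1)) * e1 + (Bc t * R ^ (m - 1 - 2 * t)) * e2 +
      (Bc t * R ^ (m - 1 - 2 * t) * X ^ (2 * t + 1)) * e3
  linear_combination B0 * e0 + hsum + (B * X) * hcast

lemma stmt19_jac_euler {m k : ℕ} (hk : m = 2 * k + 1) (A A0 B B0 : ℝ) (Ac Bc : ℕ → ℝ)
    {R X : ℝ} (hR : R ≠ 0) (hf : fOdd m A A0 Ac R X = 0) (hg : gOdd m B B0 Bc R X = 0)
    (hA : A = 0) (hBX : B * X = 0) :
    jacDet (fOdd m A A0 Ac) (gOdd m B B0 Bc) R X = 0 := by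
  subst hA
  have e1 := stmt19_euler_f hk 0 A0 Ac R X
  have e2 := stmt19_euler_g hk B B0 Bc R X
  rw [hf] at e1
  rw [hg, hBX] at e2
  simp only [sub_zero, sub_self, mul_zero, zero_sub, neg_zero] at e1 e2
  unfold jacDet
  set a := deriv (fun r => fOdd m 0 A0 Ac r X) R with ha
  set b := deriv (fun x => fOdd m 0 A0 Ac R x) X with hb
  set c := deriv (fun r => gOdd m B B0 Bc r X) R with hc
  set d := deriv (fun x => gOdd m B B0 Bc R x) X with hd
  have h3 : R * (a * d - b * c) = 0 := by linear_combination d * e1 - b * e2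
  exact (mul_eq_zero.mp h3).resolve_left hR

lemma stmt19_jac_prop {m k : ℕ} (hk : m = 2 * k + 1) (A A0 B B0 : ℝ) (Ac Bc : ℕ → ℝ)
    {R X : ℝ} (hR : 0 < R) (hA : A ≠ 0)
    (hQ : ∀ u, stmt19Qe B0 Bc k u = B / A * (u * stmt19Pe A0 Ac k u))
    (hf : fOdd m A A0 Ac R X = 0) :
    jacDet (fOdd m A A0 Ac) (gOdd m B B0 Bc) R X = 0 := by
  have hgf : ∀ r x, 0 < r → gOdd m B B0 Bc r x = B / A * x * fOdd m A A0 Ac r x := by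
    intro r x hr
    rw [stmt19_gOdd_eq hk B B0 Bc x hr.ne', stmt19_fOdd_eq hk A A0 Ac x hr.ne', hQ]
    have hpow : r ^ (m - 1) * r = r ^ m := by
      rw [← pow_succ]; congr 1; omega
    rw [← hpow]
    field_simp
  have hfX := stmt19_hasDerivAt_f_X m A A0 Ac R X
  have hfun : (fun x => gOdd m B B0 Bc R x) = fun x => B / A * x * fOdd m A A0 Ac R x :=
    funext fun x => hgf R x hR
  have hdX : deriv (fun x => gOdd m B B0 Bc R x) X
      = B / A * 1 * fOdd m A A0 Ac R X + B / A * X * deriv (fun x => fOdd m A A0 Ac R x) X := by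
    rw [hfun, hfX.deriv]
    exact (((hasDerivAt_id X).const_mul (B / A)).mul hfX).deriv
  have hdR : deriv (fun r => gOdd m B B0 Bc r X) R
      = B / A * X * deriv (fun r => fOdd m A A0 Ac r X) R := by
    have hev : (fun r => gOdd m B B0 Bc r X) =ᶠ[nhds R]
        fun r => B / A * X * fOdd m A A0 Ac r X :=
      (eventually_gt_nhds hR).mono fun r hr => hgf r X hr
    rw [hev.deriv_eq, ((stmt19_hasDerivAt_f_R m A A0 Ac R X).const_mul (B / A * X)).deriv,
      (stmt19_hasDerivAt_f_R m A A0 Ac R X).deriv]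
  unfold jacDet
  rw [hdX, hdR, hf]
  ring

lemma stmt19_jac_vanish {m k : ℕ} (hk : m = 2 * k + 1) (A A0 B B0 : ℝ) (Ac Bc : ℕ → ℝ)
    {R X : ℝ} (hR : 0 < R) (hX : X ≠ 0) (hA : A = 0)
    (hP : ∀ u, u ≠ 0 → stmt19Pe A0 Ac k u = 0) :
    jacDet (fOdd m A A0 Ac) (gOdd m B B0 Bc) R X = 0 := by
  have hf0 : ∀ r x, 0 < r → x ≠ 0 → fOdd m A A0 Ac r x = 0 := by
    intro r x hr hx
    rw [stmt19_fOdd_eq hk A A0 Ac x hr.ne', hP (x / r) (div_ne_zero hx hr.ne'), hA]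
    ring
  have h1 : deriv (fun r => fOdd m A A0 Ac r X) R = 0 := by
    have hev : (fun r => fOdd m A A0 Ac r X) =ᶠ[nhds R] fun _ => (0 : ℝ) :=
      (eventually_gt_nhds hR).mono fun r hr => hf0 r X hr hX
    rw [hev.deriv_eq, deriv_const]
  have h2 : deriv (fun x => fOdd m A A0 Ac R x) X = 0 := by
    have hev : (fun x => fOdd m A A0 Ac R x) =ᶠ[nhds X] fun _ => (0 : ℝ) :=
      (eventually_ne_nhds hX).mono fun x hx => hf0 R x hR hx
    rw [hev.deriv_eq, deriv_const]
  unfold jacDet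
  rw [h1, h2]
  ring

noncomputable def stmt19Pp (A0 : ℝ) (Ac : ℕ → ℝ) (k : ℕ) : Polynomial ℝ :=
  Polynomial.C A0 + ∑ t ∈ Finset.Icc 1 k, Polynomial.C (Ac t) * Polynomial.X ^ (2 * t)

noncomputable def stmt19Qp (B0 : ℝ) (Bc : ℕ → ℝ) (k : ℕ) : Polynomial ℝ :=
  Polynomial.C B0 + ∑ t ∈ Finset.range (k + 1), Polynomial.C (Bc t) * Polynomial.X ^ (2 * t + 1)

noncomputable def stmt19hp (A B A0 B0 : ℝ) (Ac Bc : ℕ → ℝ) (k : ℕ) : Polynomial ℝ :=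
  Polynomial.C B * (Polynomial.X * stmt19Pp A0 Ac k) - Polynomial.C A * stmt19Qp B0 Bc k

lemma stmt19_hp_eval (A B A0 B0 : ℝ) (Ac Bc : ℕ → ℝ) (k : ℕ) (u : ℝ) :
    (stmt19hp A B A0 B0 Ac Bc k).eval u
      = B * (u * stmt19Pe A0 Ac k u) - A * stmt19Qe B0 Bc k u := by
  simp [stmt19hp, stmt19Pp, stmt19Qp, stmt19Pe, stmt19Qe, Polynomial.eval_finset_sum]

lemma stmt19_hp_deg (A B A0 B0 : ℝ) (Ac Bc : ℕ → ℝ) (k : ℕ) :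
    (stmt19hp A B A0 B0 Ac Bc k).natDegree ≤ 2 * k + 1 := by
  have hP : (stmt19Pp A0 Ac k).natDegree ≤ 2 * k := by
    unfold stmt19Pp
    refine (Polynomial.natDegree_add_le _ _).trans (max_le (by simp) ?_)
    refine Polynomial.natDegree_sum_le_of_forall_le _ _ fun t ht => ?_
    refine (Polynomial.natDegree_C_mul_le _ _).trans ?_
    rw [Polynomial.natDegree_X_pow]
    have := (Finset.mem_Icc.mp ht).2; omega
  have hQ : (stmt19Qp B0 Bc k).natDegree ≤ 2 * k + 1 := by
    unfold stmt19Qp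
    refine (Polynomial.natDegree_add_le _ _).trans (max_le (by simp) ?_)
    refine Polynomial.natDegree_sum_le_of_forall_le _ _ fun t ht => ?_
    refine (Polynomial.natDegree_C_mul_le _ _).trans ?_
    rw [Polynomial.natDegree_X_pow]
    have := Finset.mem_range.mp ht; omega
  unfold stmt19hp
  refine (Polynomial.natDegree_sub_le _ _).trans (max_le ?_ ?_)
  · refine (Polynomial.natDegree_C_mul_le _ _).trans ?_
    refine Polynomial.natDegree_mul_le.trans ?_
    rw [Polynomial.natDegree_X]
    omega
  · exact (Polynomial.natDegree_C_mul_le _ _).trans (hQ.trans (by omega))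

/-- for `m ≥ 3` odd, the system `f = g = 0` has at most `m` common real zeros
`(R, X)` with `R > 0` at which the Jacobian of `(f, g)` is nonsingular, i.e. at most `m`
simple solutions in the half-plane `R > 0`. -/
theorem stmt19 (m : ℕ) (hm : 3 ≤ m) (hmo : Odd m)
    (A A0 B B0 : ℝ) (Ac Bc : ℕ → ℝ) :
    {p : ℝ × ℝ | 0 < p.1 ∧ fOdd m A A0 Ac p.1 p.2 = 0 ∧ gOdd m B B0 Bc p.1 p.2 = 0 ∧
        jacDet (fOdd m A A0 Ac) (gOdd m B B0 Bc) p.1 p.2 ≠ 0}.Finite ∧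
    {p : ℝ × ℝ | 0 < p.1 ∧ fOdd m A A0 Ac p.1 p.2 = 0 ∧ gOdd m B B0 Bc p.1 p.2 = 0 ∧
        jacDet (fOdd m A A0 Ac) (gOdd m B B0 Bc) p.1 p.2 ≠ 0}.ncard ≤ m := by
  obtain ⟨j, hj⟩ := hmo
  set k := (m - 1) / 2 with hkdef
  have hk : m = 2 * k + 1 := by omega
  set S := {p : ℝ × ℝ | 0 < p.1 ∧ fOdd m A A0 Ac p.1 p.2 = 0 ∧ gOdd m B B0 Bc p.1 p.2 = 0 ∧
      jacDet (fOdd m A A0 Ac) (gOdd m B B0 Bc) p.1 p.2 ≠ 0} with hSdef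
  by_cases hne : stmt19hp A B A0 B0 Ac Bc k = 0
  · -- the resultant-type polynomial vanishes identically: no simple solutions at all
    have hev : ∀ u : ℝ, B * (u * stmt19Pe A0 Ac k u) - A * stmt19Qe B0 Bc k u = 0 := by
      intro u
      rw [← stmt19_hp_eval A B A0 B0 Ac Bc k u, hne]
      simp
    have hSempty : S = ∅ := by
      rw [Set.eq_empty_iff_forall_notMem]
      rintro ⟨R, X⟩ hp0
      simp only [hSdef, Set.mem_setOf_eq] at hp0
      obtain ⟨hR, hf, hg, hjac⟩ := hp0
      apply hjac
      by_cases hA : A = 0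
      · by_cases hBX : B * X = 0
        · exact stmt19_jac_euler hk A A0 B B0 Ac Bc hR.ne' hf hg hA hBX
        · have hB : B ≠ 0 := fun h => hBX (by rw [h, zero_mul])
          have hX : X ≠ 0 := fun h => hBX (by rw [h, mul_zero])
          refine stmt19_jac_vanish hk A A0 B B0 Ac Bc hR hX hA ?_
          intro u hu
          have h := hev u
          rw [hA, zero_mul, sub_zero] at h
          rcases mul_eq_zero.mp h with h' | h'
          · exact absurd h' hB
          rcases mul_eq_zero.mp h' with h'' | h''
          · exact absurd h'' hu
          · exact h''
      · refine stmt19_jac_prop hk A A0 B B0 Ac Bc hR hA ?_ hf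
        intro u
        have h := hev u
        rw [div_mul_eq_mul_div, eq_div_iff hA]
        linarith
    rw [hSempty]
    exact ⟨Set.finite_empty, by simp⟩
  · -- nondegenerate case : count via the roots of the polynomial
    have hsol : ∀ R X : ℝ, 0 < R → fOdd m A A0 Ac R X = 0 → gOdd m B B0 Bc R X = 0 →
        R ^ (m - 1) * stmt19Pe A0 Ac k (X / R) = -A ∧
        R ^ (m - 1) * stmt19Qe B0 Bc k (X / R) = -(B * (X / R)) := by
      intro R X hR hf hg
      rw [stmt19_fOdd_eq hk A A0 Ac X hR.ne'] at hf
      rw [stmt19_gOdd_eq hk B B0 Bc X hR.ne'] at hg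
      have hpow : R ^ m = R ^ (m - 1) * R := by rw [← pow_succ]; congr 1; omega
      constructor
      · linarith
      · have h2 : B * (X / R) + R ^ (m - 1) * stmt19Qe B0 Bc k (X / R) = 0 := by
          rw [hpow] at hg
          field_simp
          linear_combination hg
        linarith
    set Tset := (↑(stmt19hp A B A0 B0 Ac Bc k).roots.toFinset : Set ℝ) with hT
    have hmap : ∀ p : ℝ × ℝ, p ∈ S → p.2 / p.1 ∈ Tset := by
      rintro ⟨R, X⟩ hp0
      simp only [hSdef, Set.mem_setOf_eq] at hp0
      obtain ⟨hR, hf, hg, -⟩ := hp0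
      obtain ⟨h1, h2⟩ := hsol R X hR hf hg
      have heval : (stmt19hp A B A0 B0 Ac Bc k).eval (X / R) = 0 := by
        rw [stmt19_hp_eval]
        have hRm : R ^ (m - 1) ≠ 0 := pow_ne_zero _ hR.ne'
        have hz : R ^ (m - 1) * (B * (X / R * stmt19Pe A0 Ac k (X / R))
            - A * stmt19Qe B0 Bc k (X / R)) = 0 := by
          linear_combination (B * (X / R)) * h1 - A * h2
        exact (mul_eq_zero.mp hz).resolve_left hRm
      rw [hT]
      simp only [Finset.coe_sort_coe, Finset.mem_coe, Multiset.mem_toFinset,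
        Polynomial.mem_roots hne]
      exact heval
    have hinj : Set.InjOn (fun p : ℝ × ℝ => p.2 / p.1) S := by
      rintro ⟨R1, X1⟩ hp1 ⟨R2, X2⟩ hp2 huv
      simp only [hSdef, Set.mem_setOf_eq] at hp1 hp2
      obtain ⟨hR1, hf1, hg1, hj1⟩ := hp1
      obtain ⟨hR2, hf2, hg2, hj2⟩ := hp2
      simp only at huv
      obtain ⟨h11, h12⟩ := hsol R1 X1 hR1 hf1 hg1
      obtain ⟨h21, h22⟩ := hsol R2 X2 hR2 hf2 hg2
      set u := X1 / R1 with hu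
      rw [← huv] at h21 h22
      have hXu1 : X1 = u * R1 := by rw [hu]; field_simp
      have hXu2 : X2 = u * R2 := by
        rw [huv]; field_simp
      have hReq : R1 = R2 → ((R1, X1) : ℝ × ℝ) = (R2, X2) := by
        intro h
        rw [Prod.mk.injEq]
        exact ⟨h, by rw [hXu1, hXu2, h]⟩
      have hmne : m - 1 ≠ 0 := by omega
      by_cases hPu : stmt19Pe A0 Ac k u = 0
      · by_cases hQu : stmt19Qe B0 Bc k u = 0
        · exfalso
          apply hj1
          have hA : A = 0 := by rw [hPu, mul_zero] at h11; linarith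
          have hBu : B * u = 0 := by rw [hQu, mul_zero] at h12; linarith
          have hBX : B * X1 = 0 := by
            rw [hXu1, show B * (u * R1) = B * u * R1 from by ring, hBu, zero_mul]
          exact stmt19_jac_euler hk A A0 B B0 Ac Bc hR1.ne' hf1 hg1 hA hBX
        · have hpow : R1 ^ (m - 1) = R2 ^ (m - 1) :=
            mul_right_cancel₀ hQu (by rw [h12, h22])
          exact hReq ((pow_left_strictMonoOn₀ hmne).injOn hR1.le hR2.le hpow)
      · have hpow : R1 ^ (m - 1) = R2 ^ (m - 1) :=
          mul_right_cancel₀ hPu (by rw [h11, h21])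
        exact hReq ((pow_left_strictMonoOn₀ hmne).injOn hR1.le hR2.le hpow)
    have hTfin : Tset.Finite := (stmt19hp A B A0 B0 Ac Bc k).roots.toFinset.finite_toSet
    have him : (fun p : ℝ × ℝ => p.2 / p.1) '' S ⊆ Tset := Set.image_subset_iff.mpr hmap
    have hfin : S.Finite := Set.Finite.of_finite_image (hTfin.subset him) hinj
    refine ⟨hfin, ?_⟩
    calc S.ncard = ((fun p : ℝ × ℝ => p.2 / p.1) '' S).ncard :=
          (Set.ncard_image_of_injOn hinj).symm
      _ ≤ Tset.ncard := Set.ncard_le_ncard him hTfin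
      _ = (stmt19hp A B A0 B0 Ac Bc k).roots.toFinset.card := Set.ncard_coe_finset _
      _ ≤ m := by
          have hc1 := Multiset.toFinset_card_le (stmt19hp A B A0 B0 Ac Bc k).roots
          have hc2 := (stmt19hp A B A0 B0 Ac Bc k).card_roots'
          have hc3 := stmt19_hp_deg A B A0 B0 Ac Bc k
          omega
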